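/- Left-bias of alternates: if θ ⊢ p ≈ t in the declarative semantics and the machine started from (∅, [], [match (p ∥ p') t]) reaches a terminal state, then that terminal state is success(θ'') for some θ'' (it is not failure). -/

import Mathlib

namespace PyPM
/-- Terms over a signature of function symbols (names with lists of arguments). -/
inductive Tm where
  | app : String → List Tm → Tm


/-- Basic patterns: variables, function applications, and alternates. -/
inductive Pat where
  | var : String → Pat
  | app : String → List Pat → Pat
  | alt : Pat → Pat → Pat

/-- Substitutions: finite maps from variables to terms (modeled as partial functions). -/
abbrev Subst := String → Option Tm

def emptySubst : Subst := fun _ => none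

def Subst.update (θ : Subst) (x : String) (t : Tm) : Subst :=
  fun y => if y = x then some t else θ y

/-- θ ⊆ θ' : every binding of θ is a binding of θ'. -/
def Subst.le (θ θ' : Subst) : Prop := ∀ x t, θ x = some t → θ' x = some t

/-- Declarative matching semantics: θ ⊢ p ≈ t. -/
inductive Matches : Subst → Pat → Tm → Prop where
  | var {θ : Subst} {x : String} {t : Tm} :
      θ x = some t → Matches θ (.var x) t
  | app {θ : Subst} {f : String} {ps : List Pat} {ts : List Tm}
      (hlen : ps.length = ts.length)
      (hargs : ∀ i (h1 : i < ps.length) (h2 : i < ts.length), Matches θ ps[i] ts[i]) :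
      Matches θ (.app f ps) (.app f ts)
  | alt1 {θ : Subst} {p p' : Pat} {t : Tm} :
      Matches θ p t → Matches θ (.alt p p') t
  | alt2 {θ : Subst} {p p' : Pat} {t : Tm} :
      Matches θ p' t → Matches θ (.alt p p') t

/-- Actions in the machine continuation. -/
inductive Action where
  | doMatch : Pat → Tm → Action

abbrev Cont := List Action
abbrev Frame := Subst × Cont
abbrev Stack := List Frame

/-- Machine states. -/
inductive St where
  | success : Subst → St
  | failure : St
  | running : Subst → Stack → Cont → St

/-- Backtracking: pop the stack, or fail if it is empty. -/
def backtrack : Stack → St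
  | [] => .failure
  | (θ, k) :: stk => .running θ stk k

/-- The step relation of the algorithmic matching machine. -/
inductive Step : St → St → Prop where
  | success {θ stk} :
      Step (.running θ stk []) (.success θ)
  | varBind {θ : Subst} {stk x t k} :
      θ x = none →
      Step (.running θ stk (.doMatch (.var x) t :: k)) (.running (θ.update x t) stk k)
  | varBound {θ : Subst} {stk x t k} :
      θ x = some t →
      Step (.running θ stk (.doMatch (.var x) t :: k)) (.running θ stk k)
  | varConflict {θ : Subst} {stk x t t' k} :
      θ x = some t' → t' ≠ t →
      Step (.running θ stk (.doMatch (.var x) t :: k)) (backtrack stk)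
  | fn {θ stk f ps ts k} :
      ps.length = ts.length →
      Step (.running θ stk (.doMatch (.app f ps) (.app f ts) :: k))
           (.running θ stk (((ps.zip ts).map fun pt => .doMatch pt.1 pt.2) ++ k))
  | fnConflict {θ stk f g ps ts k} :
      f ≠ g ∨ ps.length ≠ ts.length →
      Step (.running θ stk (.doMatch (.app f ps) (.app g ts) :: k)) (backtrack stk)
  | alt {θ stk p p' t k} :
      Step (.running θ stk (.doMatch (.alt p p') t :: k))
           (.running θ ((θ, .doMatch p' t :: k) :: stk) (.doMatch p t :: k))

end PyPM
namespace PyPM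

/-- Alternate-free patterns: built only from variables and function applications. -/
inductive AltFree : Pat → Prop where
  | var {x : String} : AltFree (.var x)
  | app {f : String} {ps : List Pat} : (∀ p ∈ ps, AltFree p) → AltFree (.app f ps)

/-- `VarIn x p`: the variable x occurs in the pattern p. -/
inductive VarIn (x : String) : Pat → Prop where
  | var : VarIn x (.var x)
  | app {f : String} {ps : List Pat} {p : Pat} : p ∈ ps → VarIn x p → VarIn x (.app f ps)
  | alt1 {p p' : Pat} : VarIn x p → VarIn x (.alt p p')
  | alt2 {p p' : Pat} : VarIn x p' → VarIn x (.alt p p')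

/-- Number of occurrences of the variable x in a pattern. -/
def varCount (x : String) : Pat → Nat
  | .var y => if y = x then 1 else 0
  | .app _ ps => (ps.attach.map (fun q => varCount x q.1)).sum
  | .alt p q => varCount x p + varCount x q
  decreasing_by
  all_goals first
    | (have := List.sizeOf_lt_of_mem q.2; simp only [Pat.app.sizeOf_spec]; omega)
    | (simp only [Pat.alt.sizeOf_spec]; omega)

/-- A pattern is linear if each variable occurs at most once. -/
def Linear (p : Pat) : Prop := ∀ x, varCount x p ≤ 1

/-- Reading a term as a (ground, alternate-free) pattern. -/
def Tm.toPat : Tm → Pat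
  | .app f ts => .app f (ts.attach.map (fun q => Tm.toPat q.1))
  decreasing_by
  have := List.sizeOf_lt_of_mem q.2; simp only [Tm.app.sizeOf_spec]; omega

/-- Ground, alternate-free patterns: only the function-application constructor. -/
inductive GroundAltFree : Pat → Prop where
  | app {f : String} {ps : List Pat} : (∀ p ∈ ps, GroundAltFree p) → GroundAltFree (.app f ps)

end PyPM

open PyPM

namespace PyPM

def Holds (θ : Subst) : Action → Prop
  | .doMatch p t => Matches θ p t

/-- The continuation k is satisfiable from θ. -/
def Sat (θ : Subst) (k : Cont) : Prop :=
  ∃ θ', Subst.le θ θ' ∧ ∀ a ∈ k, Holds θ' a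

/-- The invariant: some frame (current or on the stack) is satisfiable. -/
def Good : St → Prop
  | .success _ => True
  | .failure => False
  | .running θ stk k => Sat θ k ∨ ∃ fr ∈ stk, Sat fr.1 fr.2

lemma good_backtrack {stk : Stack} (h : ∃ fr ∈ stk, Sat fr.1 fr.2) :
    Good (backtrack stk) := by
  cases stk with
  | nil => simp at h
  | cons fr stk' =>
      obtain ⟨fr', hmem, hsat⟩ := h
      rcases List.mem_cons.mp hmem with h | h
      · subst h; exact Or.inl hsat
      · exact Or.inr ⟨fr', h, hsat⟩

lemma preservation {st st' : St} (hs : Step st st') (hg : Good st) : Good st' := by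
  cases hs with
  | success => trivial
  | @varBind θ stk x t k hx =>
      rcases hg with ⟨θ', hle, hall⟩ | hstk
      · refine Or.inl ⟨θ', ?_, fun a ha => hall a (List.mem_cons_of_mem _ ha)⟩
        have hvx : Matches θ' (.var x) t := hall _ (List.mem_cons_self)
        cases hvx with
        | var hv =>
          intro y u hy
          simp only [Subst.update] at hy
          split at hy
          · rename_i hyx; subst hyx; rw [hv]; exact hy
          · exact hle y u hy
      · exact Or.inr hstk
  | @varBound θ stk x t k hx =>
      rcases hg with ⟨θ', hle, hall⟩ | hstk
      · exact Or.inl ⟨θ', hle, fun a ha => hall a (List.mem_cons_of_mem _ ha)⟩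
      · exact Or.inr hstk
  | @varConflict θ stk x t t' k hx hne =>
      rcases hg with ⟨θ', hle, hall⟩ | hstk
      · exfalso
        have hvx : Matches θ' (.var x) t := hall _ (List.mem_cons_self)
        cases hvx with
        | var hv => exact hne (by have := hle x t' hx; rw [this] at hv; injection hv)
      · exact good_backtrack hstk
  | @fn θ stk f ps ts k hlen =>
      rcases hg with ⟨θ', hle, hall⟩ | hstk
      · refine Or.inl ⟨θ', hle, ?_⟩
        have hm : Matches θ' (.app f ps) (.app f ts) := hall _ (List.mem_cons_self)
        intro a ha
        rcases List.mem_append.mp ha with ha | ha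
        · obtain ⟨pt, hpt, rfl⟩ := List.mem_map.mp ha
          obtain ⟨i, hi, hget⟩ := List.mem_iff_getElem.mp hpt
          have hi1 : i < ps.length := by
            have := hi; rw [List.length_zip] at this; omega
          have hi2 : i < ts.length := by
            have := hi; rw [List.length_zip] at this; omega
          have : pt = (ps[i], ts[i]) := by rw [← hget, List.getElem_zip]
          subst this
          cases hm with
          | app hlen' hargs => exact hargs i hi1 hi2
        · exact hall a (List.mem_cons_of_mem _ ha)
      · exact Or.inr hstk
  | @fnConflict θ stk f g ps ts k hc =>
      rcases hg with ⟨θ', hle, hall⟩ | hstk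
      · exfalso
        have hm : Matches θ' (.app f ps) (.app g ts) := hall _ (List.mem_cons_self)
        cases hm with
        | app hlen' hargs =>
            rcases hc with h | h
            · exact h rfl
            · exact h hlen'
      · exact good_backtrack hstk
  | @alt θ stk p p' t k =>
      rcases hg with ⟨θ', hle, hall⟩ | hstk
      · have hm : Matches θ' (.alt p p') t := hall _ (List.mem_cons_self)
        have hrest : ∀ a ∈ k, Holds θ' a := fun a ha => hall a (List.mem_cons_of_mem _ ha)
        cases hm with
        | alt1 h =>
            refine Or.inl ⟨θ', hle, ?_⟩
            intro a ha
            rcases List.mem_cons.mp ha with rfl | ha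
            · exact h
            · exact hrest a ha
        | alt2 h =>
            refine Or.inr ⟨(θ, .doMatch p' t :: k), List.mem_cons_self, θ', hle, ?_⟩
            intro a ha
            rcases List.mem_cons.mp ha with rfl | ha
            · exact h
            · exact hrest a ha
      · obtain ⟨fr, hmem, hsat⟩ := hstk
        exact Or.inr ⟨fr, List.mem_cons_of_mem _ hmem, hsat⟩

lemma progress (θ : Subst) (stk : Stack) (k : Cont) :
    ∃ st', Step (.running θ stk k) st' := by
  cases k with
  | nil => exact ⟨_, Step.success⟩
  | cons a k =>
      obtain ⟨p, t⟩ := a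
      cases p with
      | var x =>
          cases hx : θ x with
          | none => exact ⟨_, Step.varBind hx⟩
          | some t' =>
              by_cases h : t' = t
              · subst h; exact ⟨_, Step.varBound hx⟩
              · exact ⟨_, Step.varConflict hx h⟩
      | app f ps =>
          obtain ⟨g, ts⟩ := t
          by_cases h : f = g ∧ ps.length = ts.length
          · obtain ⟨rfl, hlen⟩ := h
            exact ⟨_, Step.fn hlen⟩
          · refine ⟨_, Step.fnConflict ?_⟩
            by_cases hf : f = g
            · exact Or.inr (fun hl => h ⟨hf, hl⟩)
            · exact Or.inl hf
      | alt p p' => exact ⟨_, Step.alt⟩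

lemma good_trans {st st' : St} (h : Relation.TransGen Step st st') (hg : Good st) :
    Good st' := by
  induction h with
  | single hs => exact preservation hs hg
  | tail _ hs ih => exact preservation hs ih

end PyPM

/-- Left-bias of alternates: if the left disjunct matches declaratively (with a witness
substitution bound only on its variables, so the match is realizable from the empty
substitution), then any terminal state the machine reaches on p ∥ p' is a success. -/
theorem alt_left_bias {p p' : Pat} {t : Tm} {θ : Subst} {st : St}
    (hm : Matches θ p t)
    (hdom : ∀ x : String, (∃ u, θ x = some u) → VarIn x p)
    (hrun : Relation.TransGen Step (.running emptySubst [] [.doMatch (.alt p p') t]) st)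
    (hterm : ∀ st' : St, ¬ Step st st') :
    ∃ θ'' : Subst, st = St.success θ'' := by
  have hinit : Good (.running emptySubst [] [.doMatch (.alt p p') t]) := by
    refine Or.inl ⟨θ, fun x u hx => by simp [emptySubst] at hx, ?_⟩
    intro a ha
    rcases List.mem_cons.mp ha with rfl | ha
    · exact Matches.alt1 hm
    · simp at ha
  have hgood : Good st := good_trans hrun hinit
  cases st with
  | success θ'' => exact ⟨θ'', rfl⟩
  | failure => exact absurd hgood (by simp [Good])
  | running θ0 stk k =>
      obtain ⟨st', hst'⟩ := progress θ0 stk k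
      exact absurd hst' (hterm st')
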